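/- Let K be a field, v a nontrivial valuation on K with valuation ring A_v, maximal ideal M_v, and let T = (1 + M_v)·K*². Then for every x ∈ K*, both T and x·T are contained in the set T + x·T := {t₁ + x·t₂ : t₁, t₂ ∈ T}. -/

import Mathlib

/-- For `T = (1 + M_v)·K*²` with `v` a nontrivial valuation, for every `x ∈ K*`,
both `T` and `x·T` are contained in `T + x·T`. -/
theorem stmt_2 {K Γ₀ : Type*} [Field K] [LinearOrderedCommGroupWithZero Γ₀]
    (v : Valuation K Γ₀) (hv : ∃ p : K, p ≠ 0 ∧ v p ≠ 1)
    (T : Set K)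
    (hT : T = {t : K | ∃ u c : K, v (u - 1) < 1 ∧ c ≠ 0 ∧ t = u * c ^ 2})
    (x : K) (hx : x ≠ 0) :
    (∀ t ∈ T, ∃ t₁ ∈ T, ∃ t₂ ∈ T, t = t₁ + x * t₂) ∧
    (∀ t ∈ T, ∃ t₁ ∈ T, ∃ t₂ ∈ T, x * t = t₁ + x * t₂) := by
  -- First find π with 0 < v π < 1
  obtain ⟨p, hp0, hp1⟩ := hv
  have hvp0 : v p ≠ 0 := by simpa using hp0
  obtain ⟨π, hπ0, hπ1⟩ : ∃ π : K, π ≠ 0 ∧ v π < 1 := by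
    rcases lt_or_gt_of_ne hp1 with h | h
    · exact ⟨p, hp0, h⟩
    · refine ⟨p⁻¹, inv_ne_zero hp0, ?_⟩
      rw [map_inv₀]
      exact inv_lt_one_of_one_lt₀ h
  -- find c ≠ 0 with v (x * c^2) < 1
  obtain ⟨c, hc0, hcx⟩ : ∃ c : K, c ≠ 0 ∧ v (x * c ^ 2) < 1 := by
    rcases le_or_gt (v x) 1 with h | h
    · refine ⟨π, hπ0, ?_⟩
      have : v (x * π ^ 2) = v x * (v π * v π) := by
        rw [map_mul, map_pow, sq]
      rw [this]
      calc v x * (v π * v π) ≤ 1 * (v π * v π) := by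
            apply mul_le_mul_left h
        _ = v π * v π := one_mul _
        _ < 1 := by
            have h0 : v π ≠ 0 := by simpa using hπ0
            calc v π * v π ≤ 1 * v π := mul_le_mul_left hπ1.le _
              _ = v π := one_mul _
              _ < 1 := hπ1
    · refine ⟨π * x⁻¹, mul_ne_zero hπ0 (inv_ne_zero hx), ?_⟩
      have hx0 : v x ≠ 0 := by simpa using hx
      have : v (x * (π * x⁻¹) ^ 2) = v π * v π * (v x)⁻¹ := by
        rw [map_mul, map_pow, map_mul, map_inv₀, mul_pow, sq (v π), inv_pow, sq (v x)]
        field_simp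
      rw [this]
      have hxinv : (v x)⁻¹ < 1 := inv_lt_one_of_one_lt₀ h
      have hππ : v π * v π ≤ 1 := by
        calc v π * v π ≤ 1 * v π := mul_le_mul_left hπ1.le _
          _ = v π := one_mul _
          _ ≤ 1 := hπ1.le
      calc v π * v π * (v x)⁻¹ ≤ 1 * (v x)⁻¹ := mul_le_mul_left hππ _
        _ = (v x)⁻¹ := one_mul _
        _ < 1 := hxinv
  -- The element 1 - x*c^2 is in 1 + M_v
  have hw : v ((1 - x * c ^ 2) - 1) < 1 := by
    have : (1 - x * c ^ 2) - 1 = -(x * c ^ 2) := by ring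
    rw [this, v.map_neg]; exact hcx
  subst hT
  constructor
  · rintro t ⟨u, a, hu, ha, rfl⟩
    -- t₁ = u*(1 - x c²)*a², t₂ = u*(a*c)²
    have hu1 : v u ≤ 1 := by
      have : u = (u - 1) + 1 := by ring
      rw [this]
      exact le_trans (v.map_add _ _) (by simpa using max_le hu.le le_rfl)
    refine ⟨u * (1 - x * c ^ 2) * a ^ 2, ⟨u * (1 - x * c ^ 2), a, ?_, ha, rfl⟩,
            u * (a * c) ^ 2, ⟨u, a * c, hu, mul_ne_zero ha hc0, rfl⟩, by ring⟩
    · have heq : u * (1 - x * c ^ 2) - 1 = u * ((1 - x * c ^ 2) - 1) + (u - 1) := by ring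
      rw [heq]
      refine lt_of_le_of_lt (v.map_add _ _) (max_lt ?_ hu)
      rw [map_mul]
      calc v u * v ((1 - x * c ^ 2) - 1) ≤ 1 * v ((1 - x * c ^ 2) - 1) :=
            mul_le_mul_left hu1 _
        _ = _ := one_mul _
        _ < 1 := hw
  · rintro t ⟨u, a, hu, ha, rfl⟩
    -- x*t = u*(a*x*c)² + x*(u*(1 - x c²)*a²)
    have hu1 : v u ≤ 1 := by
      have : u = (u - 1) + 1 := by ring
      rw [this]
      exact le_trans (v.map_add _ _) (by simpa using max_le hu.le le_rfl)
    refine ⟨u * (a * x * c) ^ 2, ⟨u, a * x * c, hu, mul_ne_zero (mul_ne_zero ha hx) hc0, rfl⟩,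
            u * (1 - x * c ^ 2) * a ^ 2, ⟨u * (1 - x * c ^ 2), a, ?_, ha, rfl⟩, by ring⟩
    · have heq : u * (1 - x * c ^ 2) - 1 = u * ((1 - x * c ^ 2) - 1) + (u - 1) := by ring
      rw [heq]
      refine lt_of_le_of_lt (v.map_add _ _) (max_lt ?_ hu)
      rw [map_mul]
      calc v u * v ((1 - x * c ^ 2) - 1) ≤ 1 * v ((1 - x * c ^ 2) - 1) :=
            mul_le_mul_left hu1 _
        _ = _ := one_mul _
        _ < 1 := hw
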